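/- Let T be an almost-Suslin ω₁-tree. Then for every X ⊆ ω₁, T↾X ∈ NS^T if and only if X is nonstationary in ω₁. -/

import Mathlib

open Set

/-- The first uncountable ordinal `ω₁`. -/
noncomputable def omega1 : Ordinal := Ordinal.omega 1

section TreeDefs

variable {T : Type*} [PartialOrder T]

/-- In a tree, the set of strict predecessors of any node is linearly ordered. -/
def PredsChain (T : Type*) [PartialOrder T] : Prop :=
  ∀ t : T, IsChain (· ≤ ·) {s : T | s < t}

/-- `ht` is *the* height function of the tree: it is strictly monotone on comparable pairs and
the heights of the strict predecessors of `t` are exactly the ordinals below `ht t`; together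
with `PredsChain` this says that the set `t↓` of strict predecessors of `t` is well-ordered
with order type `ht t`. -/
def IsHeightFun (ht : T → Ordinal) : Prop :=
  (∀ s t : T, s < t → ht s < ht t) ∧
  ∀ t : T, ∀ o : Ordinal, o < ht t → ∃ s : T, s < t ∧ ht s = o

/-- The tree has height `ω₁`: every node has height `< ω₁` and every countable ordinal is the
height of some node. -/
def HeightOmega1 (ht : T → Ordinal) : Prop :=
  (∀ t : T, ht t < omega1) ∧ ∀ o : Ordinal, o < omega1 → ∃ t : T, ht t = o

/-- All levels of the tree are countable. -/
def CountableLevels (ht : T → Ordinal) : Prop :=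
  ∀ o : Ordinal, {t : T | ht t = o}.Countable

/-- A tree of height `ω₁` is well-pruned if every node has successors in all later levels. -/
def WellPruned (ht : T → Ordinal) : Prop :=
  ∀ o o' : Ordinal, o < o' → o' < omega1 →
    ∀ s : T, ht s = o → ∃ t : T, s < t ∧ ht t = o'

/-- A special subset of a tree: a union of countably many antichains. -/
def IsSpecialSet (U : Set T) : Prop :=
  ∃ A : ℕ → Set T, (∀ n : ℕ, IsAntichain (· ≤ ·) (A n)) ∧ U ⊆ ⋃ n, A n

/-- Membership in the ideal `NS^T`: there is a regressive map on `B` all of whose fibers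
are special. -/
def InNS [OrderBot T] (B : Set T) : Prop :=
  ∃ f : T → T, (∀ t ∈ B, t ≠ ⊥ → f t < t) ∧
    ∀ t : T, IsSpecialSet {s : T | s ∈ B ∧ f s = t}

/-- The diamond principle `◊_T` for a tree `T`. -/
def DiamondTree (T : Type*) [PartialOrder T] [OrderBot T] : Prop :=
  ∃ D : T → Set T, (∀ t : T, D t ⊆ Set.Iio t) ∧
    ∀ X : Set T, ¬ InNS {t : T | X ∩ Set.Iio t = D t}

end TreeDefs

/-- Club subsets of `ω₁`: closed and unbounded in `ω₁`. -/
def IsClubIn (C : Set Ordinal) : Prop :=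
  C ⊆ Set.Iio omega1 ∧
  (∀ o : Ordinal, o < omega1 → ∃ b ∈ C, o < b) ∧
  ∀ o : Ordinal, o < omega1 → (C ∩ Set.Iio o).Nonempty →
    IsLUB (C ∩ Set.Iio o) o → o ∈ C

/-- Stationary subsets of `ω₁`: sets meeting every club. -/
def IsStationaryIn (S : Set Ordinal) : Prop :=
  ∀ C : Set Ordinal, IsClubIn C → (S ∩ C).Nonempty

/-- The diamond principle `◊(S)` for `S ⊆ ω₁`;  `◊` is `DiamondOn (Set.Iio omega1)`. -/
def DiamondOn (S : Set Ordinal) : Prop :=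
  ∃ D : Ordinal → Set Ordinal, (∀ o ∈ S, D o ⊆ Set.Iio o) ∧
    ∀ X : Set Ordinal, X ⊆ Set.Iio omega1 →
      IsStationaryIn {o ∈ S | X ∩ Set.Iio o = D o}


section AuxLemmas
open Cardinal

lemma omega1_eq_ord : omega1 = (Cardinal.aleph 1).ord := (Cardinal.ord_aleph 1).symm

lemma omega1_pos : (0 : Ordinal) < omega1 := Ordinal.omega_pos 1

lemma omega1_isLimit : Order.IsSuccLimit omega1 := Cardinal.isSuccLimit_omega 1

lemma succ_lt_omega1 {o : Ordinal} (h : o < omega1) : o + 1 < omega1 := by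
  rw [Ordinal.add_one_eq_succ]; exact omega1_isLimit.succ_lt h

lemma self_lt_succ (o : Ordinal) : o < o + 1 := by
  rw [Ordinal.add_one_eq_succ]; exact Order.lt_succ o

lemma card_le_of_lt_omega1 {o : Ordinal} (h : o < omega1) : o.card ≤ ℵ₀ := by
  rw [omega1_eq_ord, Cardinal.lt_ord, ← Cardinal.succ_aleph0, Order.lt_succ_iff] at h
  exact h

lemma countable_Iio_of_lt_omega1 {o : Ordinal} (h : o < omega1) : (Set.Iio o).Countable := by
  rw [← Cardinal.le_aleph0_iff_set_countable, Ordinal.mk_Iio_ordinal, Cardinal.lift_le_aleph0]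
  exact card_le_of_lt_omega1 h

lemma iSup_lt_omega1 {f : ℕ → Ordinal} (h : ∀ n, f n < omega1) : (⨆ n, f n) < omega1 := by
  rw [omega1_eq_ord]
  rw [Cardinal.ord_aleph]; exact Ordinal.iSup_lt_omega_one h

lemma sSup_lt_omega1 {S : Set Ordinal} (hc : S.Countable) (hS : S ⊆ Set.Iio omega1) :
    sSup S < omega1 := by
  rcases S.eq_empty_or_nonempty with rfl | hne
  · rw [csSup_empty]; exact omega1_pos
  · obtain ⟨f, rfl⟩ := hc.exists_eq_range hne
    have hr : sSup (Set.range f) = ⨆ n, f n := rfl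
    rw [hr]
    exact iSup_lt_omega1 (fun n => hS (Set.mem_range_self n))

lemma countable_ht_lt {T : Type*} (ht : T → Ordinal) (hlev : CountableLevels ht)
    {β : Ordinal} (hβ : β < omega1) : {u : T | ht u < β}.Countable := by
  have hsub : {u : T | ht u < β} ⊆ ⋃ o ∈ Set.Iio β, {u : T | ht u = o} :=
    fun u hu => Set.mem_biUnion hu rfl
  exact ((countable_Iio_of_lt_omega1 hβ).biUnion fun o _ => hlev o).mono hsub

lemma isSpecialSet_of_countable {T : Type*} [PartialOrder T] {U : Set T} (h : U.Countable) :
    IsSpecialSet U := by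
  rcases U.eq_empty_or_nonempty with rfl | hne
  · exact ⟨fun _ => ∅, fun _ => Set.subsingleton_empty.isAntichain _, Set.empty_subset _⟩
  · obtain ⟨g, rfl⟩ := h.exists_eq_range hne
    refine ⟨fun n => {g n}, fun n => IsAntichain.singleton, ?_⟩
    rintro x ⟨n, rfl⟩
    exact Set.mem_iUnion.2 ⟨n, rfl⟩

lemma ht_bot_eq_zero {T : Type*} [PartialOrder T] [OrderBot T] {ht : T → Ordinal}
    (hht : IsHeightFun ht) : ht ⊥ = 0 := by
  by_contra h
  obtain ⟨s, hs, -⟩ := hht.2 ⊥ 0 (pos_iff_ne_zero.2 h)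
  exact not_lt_bot hs

lemma ht_pos_of_ne_bot {T : Type*} [PartialOrder T] [OrderBot T] {ht : T → Ordinal}
    (hht : IsHeightFun ht) {t : T} (h : t ≠ ⊥) : 0 < ht t := by
  have h2 := hht.1 ⊥ t (Ne.bot_lt h)
  rwa [ht_bot_eq_zero hht] at h2

lemma exists_club_disjoint {S : Set Ordinal} (h : ¬ IsStationaryIn S) :
    ∃ C : Set Ordinal, IsClubIn C ∧ ∀ o ∈ S, o ∉ C := by
  unfold IsStationaryIn at h
  push_neg at h
  obtain ⟨C, hC, hemp⟩ := h
  exact ⟨C, hC, fun o h1 h2 => by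
    have : o ∈ S ∩ C := ⟨h1, h2⟩
    rw [hemp] at this
    exact this⟩

lemma diagonal_club {T : Type*} (ht : T → Ordinal) (hlev : CountableLevels ht)
    (C : T → ℕ → Set Ordinal) (hC : ∀ u n, IsClubIn (C u n)) :
    IsClubIn {δ : Ordinal | 0 < δ ∧ δ < omega1 ∧ ∀ u : T, ht u < δ → ∀ n : ℕ, δ ∈ C u n} := by
  classical
  refine ⟨fun δ h => h.2.1, ?_, ?_⟩
  · -- unbounded
    intro o ho
    have hch : ∀ (u : T) (n : ℕ) (β : Ordinal), ∃ c : Ordinal,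
        β < omega1 → c ∈ C u n ∧ β < c := by
      intro u n β
      by_cases h : β < omega1
      · obtain ⟨c, hc1, hc2⟩ := (hC u n).2.1 β h
        exact ⟨c, fun _ => ⟨hc1, hc2⟩⟩
      · exact ⟨0, fun h' => absurd h' h⟩
    choose cp hcp using hch
    set G : Ordinal → Set Ordinal := fun β => insert (β + 1)
        ((fun p : T × ℕ => cp p.1 p.2 β) '' ({u : T | ht u < β} ×ˢ (Set.univ : Set ℕ))) with hG
    have hGsub : ∀ β : Ordinal, β < omega1 → G β ⊆ Set.Iio omega1 := by
      intro β hβ x hx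
      rcases hx with rfl | ⟨⟨u, n⟩, ⟨hu, -⟩, rfl⟩
      · exact succ_lt_omega1 hβ
      · exact (hC u n).1 (hcp u n β hβ).1
    have hGbdd : ∀ β : Ordinal, β < omega1 → BddAbove (G β) := by
      intro β hβ
      exact ⟨omega1, fun x hx => le_of_lt (hGsub β hβ hx)⟩
    set g : Ordinal → Ordinal := fun β => sSup (G β) with hg
    have hg_lt : ∀ β, β < omega1 → g β < omega1 := by
      intro β hβ
      apply sSup_lt_omega1 _ (hGsub β hβ)
      exact (((countable_ht_lt ht hlev hβ).prod Set.countable_univ).image _).insert _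
    have hg_gt : ∀ β, β < omega1 → β < g β := fun β hβ =>
      lt_of_lt_of_le (self_lt_succ β) (le_csSup (hGbdd β hβ) (Set.mem_insert _ _))
    have hg_mem : ∀ β, β < omega1 → ∀ u : T, ht u < β → ∀ n : ℕ,
        cp u n β ∈ C u n ∧ β < cp u n β ∧ cp u n β ≤ g β := by
      intro β hβ u hu n
      refine ⟨(hcp u n β hβ).1, (hcp u n β hβ).2, le_csSup (hGbdd β hβ) ?_⟩
      exact Set.mem_insert_of_mem _ ⟨⟨u, n⟩, ⟨hu, Set.mem_univ n⟩, rfl⟩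
    set e : ℕ → Ordinal := fun k => Nat.rec (o + 1) (fun _ ih => g ih) k with he
    have he0 : e 0 = o + 1 := rfl
    have heS : ∀ k, e (k + 1) = g (e k) := fun k => rfl
    have helt : ∀ k, e k < omega1 := by
      intro k
      induction k with
      | zero => exact succ_lt_omega1 ho
      | succ k ih => rw [heS]; exact hg_lt _ ih
    have hemono : StrictMono e := strictMono_nat_of_lt_succ
      (fun k => by rw [heS]; exact hg_gt _ (helt k))
    have hbddrange : BddAbove (Set.range e) :=
      ⟨omega1, by rintro x ⟨k, rfl⟩; exact le_of_lt (helt k)⟩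
    have hδlt : (⨆ k, e k) < omega1 := iSup_lt_omega1 helt
    have hele : ∀ k, e k ≤ ⨆ k, e k := fun k => le_ciSup hbddrange k
    have hc_in : ∀ u : T, ∀ n : ℕ, ∀ k, ht u < e k → ∀ j, k ≤ j →
        cp u n (e j) ∈ C u n ∩ Set.Iio (⨆ k, e k) ∧ e j < cp u n (e j) := by
      intro u n k hk j hj
      have huj : ht u < e j := lt_of_lt_of_le hk (hemono.monotone hj)
      obtain ⟨h1, h2, h3⟩ := hg_mem (e j) (helt j) u huj n
      refine ⟨⟨h1, ?_⟩, h2⟩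
      calc cp u n (e j) ≤ e (j + 1) := by rw [heS]; exact h3
        _ < e (j + 2) := hemono (Nat.lt_succ_self (j + 1))
        _ ≤ ⨆ k, e k := hele (j + 2)
    refine ⟨⨆ k, e k, ⟨?_, hδlt, ?_⟩, lt_of_lt_of_le (self_lt_succ o) (hele 0)⟩
    · exact lt_of_le_of_lt (zero_le (a := o)) (lt_of_lt_of_le (self_lt_succ o) (hele 0))
    · intro u hu n
      obtain ⟨k, hk⟩ := (lt_ciSup_iff hbddrange).1 hu
      have hne : (C u n ∩ Set.Iio (⨆ k, e k)).Nonempty := ⟨_, (hc_in u n k hk k le_rfl).1⟩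
      have hlub : IsLUB (C u n ∩ Set.Iio (⨆ k, e k)) (⨆ k, e k) := by
        constructor
        · exact fun x hx => le_of_lt hx.2
        · intro b hb
          refine ciSup_le fun j => ?_
          have h1 := hc_in u n k hk (max j k) (le_max_right _ _)
          have h2 : cp u n (e (max j k)) ≤ b := hb h1.1
          exact le_of_lt (lt_of_le_of_lt (hemono.monotone (le_max_left j k))
            (lt_of_lt_of_le h1.2 h2))
      exact (hC u n).2.2 _ hδlt hne hlub
  · -- closed
    intro o ho hne hlub
    obtain ⟨d, hdD, hdo⟩ := hne
    refine ⟨lt_of_le_of_lt (zero_le (a := d)) hdo, ho, ?_⟩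
    intro u hu n
    have hex : ∃ d', d' ∈ ({δ : Ordinal | 0 < δ ∧ δ < omega1 ∧
        ∀ u : T, ht u < δ → ∀ n : ℕ, δ ∈ C u n} ∩ Set.Iio o) ∧ ht u < d' := by
      by_contra h
      push_neg at h
      exact absurd (hlub.2 h) (not_le.2 hu)
    obtain ⟨d', ⟨hd'D, hd'o⟩, hud'⟩ := hex
    have hne' : (C u n ∩ Set.Iio o).Nonempty := ⟨d', hd'D.2.2 u hud' n, hd'o⟩
    have hlub' : IsLUB (C u n ∩ Set.Iio o) o := by
      constructor
      · exact fun x hx => le_of_lt hx.2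
      · intro b hb
        by_contra hbo
        push_neg at hbo
        have hex2 : ∃ d'', d'' ∈ ({δ : Ordinal | 0 < δ ∧ δ < omega1 ∧
            ∀ u : T, ht u < δ → ∀ n : ℕ, δ ∈ C u n} ∩ Set.Iio o) ∧ max b (ht u) < d'' := by
          by_contra h
          push_neg at h
          exact absurd (hlub.2 h) (not_le.2 (max_lt hbo hu))
        obtain ⟨d'', ⟨hd''D, hd''o⟩, hm⟩ := hex2
        have hd''C : d'' ∈ C u n := hd''D.2.2 u (lt_of_le_of_lt (le_max_right _ _) hm) n
        exact absurd (hb ⟨hd''C, hd''o⟩) (not_le.2 (lt_of_le_of_lt (le_max_left _ _) hm))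
    exact (hC u n).2.2 o ho hne' hlub'

end AuxLemmas

/-- Let `T` be an almost-Suslin `ω₁`-tree (the set of heights of every
antichain is nonstationary in `ω₁`). Then for every `X ⊆ ω₁`, `T ↾ X ∈ NS^T` if and only
if `X` is nonstationary in `ω₁`. -/
theorem stmt17 {T : Type*} [PartialOrder T] [OrderBot T]
    (hchain : PredsChain T) (ht : T → Ordinal)
    (hht : IsHeightFun ht) (hΩ : HeightOmega1 ht) (hlev : CountableLevels ht)
    (has : ∀ A : Set T, IsAntichain (· ≤ ·) A → ¬ IsStationaryIn (ht '' A)) :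
    ∀ X : Set Ordinal, X ⊆ Set.Iio omega1 →
      (InNS {t : T | ht t ∈ X} ↔ ¬ IsStationaryIn X) := by
  intro X hX
  constructor
  · rintro ⟨f, hreg, hfib⟩ hstat
    choose A hAanti hAcov using hfib
    have hclubs : ∀ (t : T) (n : ℕ), ∃ Cl : Set Ordinal,
        IsClubIn Cl ∧ ∀ o ∈ ht '' A t n, o ∉ Cl :=
      fun t n => exists_club_disjoint (has (A t n) (hAanti t n))
    choose C hCclub hCdisj using hclubs
    obtain ⟨δ, hδX, hδD⟩ := hstat _ (diagonal_club ht hlev C hCclub)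
    obtain ⟨hδ0, hδlt, hδmem⟩ := hδD
    obtain ⟨t, htδ⟩ := hΩ.2 δ (hX hδX)
    have htX : ht t ∈ X := by rw [htδ]; exact hδX
    have htne : t ≠ ⊥ := by
      intro h
      rw [h, ht_bot_eq_zero hht] at htδ
      exact hδ0.ne' htδ.symm
    have hft : f t < t := hreg t htX htne
    have htmem : t ∈ ⋃ n, A (f t) n := hAcov (f t) ⟨htX, rfl⟩
    obtain ⟨n, hn⟩ := Set.mem_iUnion.1 htmem
    have h1 : δ ∈ C (f t) n := hδmem (f t) (by rw [← htδ]; exact hht.1 _ _ hft) n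
    exact hCdisj (f t) n δ ⟨t, hn, htδ⟩ h1
  · intro hns
    obtain ⟨Cl, hCl, hdisj⟩ := exists_club_disjoint hns
    have key : ∀ t : T, ht t ∈ X → t ≠ ⊥ →
        ∃ s : T, s < t ∧ ht s = sSup (Cl ∩ Set.Iio (ht t)) := by
      intro t htX htb
      apply hht.2
      have hub : ht t ∈ upperBounds (Cl ∩ Set.Iio (ht t)) := fun c hc => le_of_lt hc.2
      rcases lt_or_eq_of_le (csSup_le' hub) with h | h
      · exact h
      · exfalso
        rcases (Cl ∩ Set.Iio (ht t)).eq_empty_or_nonempty with hemp | hnem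
        · rw [hemp, csSup_empty, Ordinal.bot_eq_zero] at h
          exact (ht_pos_of_ne_bot hht htb).ne' h.symm
        · have hlub := isLUB_csSup hnem ⟨ht t, hub⟩
          rw [h] at hlub
          exact hdisj (ht t) htX (hCl.2.2 (ht t) (hΩ.1 t) hnem hlub)
    classical
    choose sel hsel1 hsel2 using key
    refine ⟨fun t => if h : ht t ∈ X ∧ t ≠ ⊥ then sel t h.1 h.2 else ⊥, ?_, ?_⟩
    · intro t htX htb
      show (if h : ht t ∈ X ∧ t ≠ ⊥ then sel t h.1 h.2 else ⊥) < t
      rw [dif_pos ⟨htX, htb⟩]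
      exact hsel1 t htX htb
    · intro s
      apply isSpecialSet_of_countable
      obtain ⟨c, hcCl, hsc⟩ := hCl.2.1 (ht s) (hΩ.1 s)
      have hsub : {u : T | u ∈ {t : T | ht t ∈ X} ∧
          (fun t => if h : ht t ∈ X ∧ t ≠ ⊥ then sel t h.1 h.2 else ⊥) u = s} ⊆
          {u : T | ht u < c + 1} := by
        rintro u ⟨huX, hfu⟩
        by_cases hub : u = ⊥
        · show ht u < c + 1
          rw [hub, ht_bot_eq_zero hht]
          exact lt_of_le_of_lt (zero_le (a := c)) (self_lt_succ c)
        · simp only [dif_pos (⟨huX, hub⟩ : ht u ∈ X ∧ u ≠ ⊥)] at hfu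
          have h2 := hsel2 u huX hub
          rw [hfu] at h2
          show ht u < c + 1
          by_contra hge
          push_neg at hge
          have hcu : c < ht u := lt_of_lt_of_le (self_lt_succ c) hge
          have hle : c ≤ sSup (Cl ∩ Set.Iio (ht u)) :=
            le_csSup ⟨ht u, fun x hx => le_of_lt hx.2⟩ ⟨hcCl, hcu⟩
          rw [← h2] at hle
          exact absurd hsc (not_lt.2 hle)
      exact (countable_ht_lt ht hlev (succ_lt_omega1 (hCl.1 hcCl))).mono hsub
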